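/- Let T act on S^{2n-1} ⊂ ℂⁿ via nonzero weights w₁,…,w_n ∈ Λ*, no two of which are negative multiples of each other, and let e₁ ∈ Λ be primitive with ⟨w_j, e₁⟩ ≠ 0 for all j, generating the subtorus T₁. Group the weights into maximal colinear families determined by representatives w₁,…,w_N (pairwise non-proportional), with w_j ∈ {ℓ·w_ν : ℓ ∈ ℤ_{>0}} for a unique ν. Let V_ν := {z ∈ ℂⁿ : z_j = 0 whenever w_j is not parallel to w_ν} and S_ν := V_ν ∩ S^{2n-1}. Then the T₁-relative fixed point set F_{T₁} = {z ∈ S^{2n-1} : L_z(t) = L_z(t₁)} equals the disjoint union ⊔_{ν=1}^N S_ν. -/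

import Mathlib

open scoped RealInnerProductSpace

/-- Let the torus `T` act on `S^{2n-1} ⊂ ℂⁿ` via nonzero weights
`w₁, …, w_n ∈ Λ*`, no two of which are negative multiples of each other, and let
`e₁ ∈ Λ` satisfy `⟨w j, e₁⟩ ≠ 0` for all `j` (so the subtorus `T₁` it generates acts
locally freely).  The infinitesimal action at `z` is
`L z ξ = (2πi ⟨w j, ξ⟩ z j)_j`.  Writing `w i ∥ w j` for "`w i` is a positive multiple
of `w j`" and `S_i = {z ∈ S^{2n-1} | z j = 0 whenever ¬(w j ∥ w i)}` for the unit
spheres of the maximal colinear coordinate subspaces `V_ν`, the `T₁`-relative fixed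
point set `F_{T₁} = {z ∈ S^{2n-1} | L z (t) = L z (ℝ e₁)}` equals the union of the
`S_i`, and the `S_i`, `S_j` for non-parallel `w i`, `w j` are disjoint. -/
theorem relative_fixed_point_set_of_sphere
    (k n : ℕ) (w : Fin n → EuclideanSpace ℝ (Fin k)) (e₁ : EuclideanSpace ℝ (Fin k))
    (hw0 : ∀ j, w j ≠ 0)
    (hneg : ∀ i j (c : ℝ), c < 0 → w i ≠ c • w j)
    (he : ∀ j, (⟪w j, e₁⟫ : ℝ) ≠ 0) :
    ({z : EuclideanSpace ℂ (Fin n) | ‖z‖ = 1 ∧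
        Set.range (fun ξ : EuclideanSpace ℝ (Fin k) =>
          fun j : Fin n => (2 * Real.pi * Complex.I * ((⟪w j, ξ⟫ : ℝ) : ℂ)) * z j) =
        Set.range (fun r : ℝ =>
          fun j : Fin n => (2 * Real.pi * Complex.I * ((⟪w j, r • e₁⟫ : ℝ) : ℂ)) * z j)}
      = ⋃ i : Fin n,
          {z : EuclideanSpace ℂ (Fin n) | ‖z‖ = 1 ∧
            ∀ j, ¬ (∃ c : ℝ, 0 < c ∧ w j = c • w i) → z j = 0}) ∧
    (∀ i j : Fin n, ¬ (∃ c : ℝ, 0 < c ∧ w i = c • w j) →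
      ({z : EuclideanSpace ℂ (Fin n) | ‖z‖ = 1 ∧
          ∀ l, ¬ (∃ c : ℝ, 0 < c ∧ w l = c • w i) → z l = 0} ∩
        {z : EuclideanSpace ℂ (Fin n) | ‖z‖ = 1 ∧
          ∀ l, ¬ (∃ c : ℝ, 0 < c ∧ w l = c • w j) → z l = 0}) = ∅) := by
  have hI : (2 * Real.pi * Complex.I : ℂ) ≠ 0 := by
    simp [Real.pi_ne_zero, Complex.I_ne_zero]
  have symm : ∀ i j : Fin n, (∃ c : ℝ, 0 < c ∧ w i = c • w j) →
      (∃ c : ℝ, 0 < c ∧ w j = c • w i) := by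
    rintro i j ⟨c, hc, hij⟩
    exact ⟨c⁻¹, by positivity, by rw [hij, smul_smul, inv_mul_cancel₀ hc.ne', one_smul]⟩
  have trans : ∀ i j l : Fin n, (∃ c : ℝ, 0 < c ∧ w i = c • w j) →
      (∃ c : ℝ, 0 < c ∧ w j = c • w l) → (∃ c : ℝ, 0 < c ∧ w i = c • w l) := by
    rintro i j l ⟨c, hc, hij⟩ ⟨d, hd, hjl⟩
    exact ⟨c * d, by positivity, by rw [hij, hjl, smul_smul]⟩
  have nz : ∀ z : EuclideanSpace ℂ (Fin n), ‖z‖ = 1 → ∃ i, z i ≠ 0 := by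
    intro z hz
    by_contra h
    push_neg at h
    have : z = 0 := PiLp.ext h
    rw [this] at hz; simp at hz
  constructor
  · ext z
    simp only [Set.mem_setOf_eq, Set.mem_iUnion]
    constructor
    · rintro ⟨hz, hr⟩
      obtain ⟨i, hi⟩ := nz z hz
      refine ⟨i, hz, fun j hnp => ?_⟩
      by_contra hj
      apply hnp
      have key : ∀ ξ : EuclideanSpace ℝ (Fin k), ∃ r : ℝ,
          ∀ l, z l ≠ 0 → (⟪w l, ξ⟫ : ℝ) = r * ⟪w l, e₁⟫ := by
        intro ξ
        have hmem : (fun l : Fin n => (2 * Real.pi * Complex.I * ((⟪w l, ξ⟫ : ℝ) : ℂ)) * z l)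
            ∈ Set.range (fun r : ℝ =>
              fun l : Fin n => (2 * Real.pi * Complex.I * ((⟪w l, r • e₁⟫ : ℝ) : ℂ)) * z l) := by
          rw [← hr]; exact ⟨ξ, rfl⟩
        obtain ⟨r, hreq⟩ := hmem
        refine ⟨r, fun l hl => ?_⟩
        have h0 := congrFun hreq l
        simp only [real_inner_smul_right] at h0
        have h2 : ((r * ⟪w l, e₁⟫ : ℝ) : ℂ) = ((⟪w l, ξ⟫ : ℝ) : ℂ) :=
          mul_left_cancel₀ hI (mul_right_cancel₀ hl h0)
        exact_mod_cast h2.symm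
      have prop : ∀ ξ : EuclideanSpace ℝ (Fin k),
          (⟪w i, e₁⟫ : ℝ) * ⟪w j, ξ⟫ = (⟪w j, e₁⟫ : ℝ) * ⟪w i, ξ⟫ := by
        intro ξ
        obtain ⟨r, hr'⟩ := key ξ
        rw [hr' i hi, hr' j hj]; ring
      have heq : (⟪w i, e₁⟫ : ℝ) • w j = (⟪w j, e₁⟫ : ℝ) • w i := by
        apply ext_inner_right ℝ
        intro v
        rw [real_inner_smul_left, real_inner_smul_left]
        exact prop v
      have hwj : w j = ((⟪w j, e₁⟫ : ℝ) / ⟪w i, e₁⟫) • w i := by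
        have h2 : ((⟪w i, e₁⟫ : ℝ))⁻¹ • ((⟪w i, e₁⟫ : ℝ) • w j)
            = ((⟪w i, e₁⟫ : ℝ))⁻¹ • ((⟪w j, e₁⟫ : ℝ) • w i) := by rw [heq]
        rw [smul_smul, smul_smul, inv_mul_cancel₀ (he i), one_smul] at h2
        rw [div_eq_inv_mul]; exact h2
      refine ⟨(⟪w j, e₁⟫ : ℝ) / ⟪w i, e₁⟫, ?_, hwj⟩
      rcases lt_trichotomy ((⟪w j, e₁⟫ : ℝ) / ⟪w i, e₁⟫) 0 with h | h | h
      · exact absurd hwj (hneg j i _ h)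
      · exact absurd h (div_ne_zero (he j) (he i))
      · exact h
    · rintro ⟨i, hz, hi⟩
      refine ⟨hz, Set.Subset.antisymm ?_ ?_⟩
      · rintro f ⟨ξ, rfl⟩
        refine ⟨(⟪w i, ξ⟫ : ℝ) / ⟪w i, e₁⟫, funext fun j => ?_⟩
        by_cases hj : z j = 0
        · simp [hj]
        · obtain ⟨c, hc, hcw⟩ : ∃ c : ℝ, 0 < c ∧ w j = c • w i := by
            by_contra hc; exact hj (hi j hc)
          simp only [real_inner_smul_right]
          have hkey : ((⟪w i, ξ⟫ : ℝ) / ⟪w i, e₁⟫) * ⟪w j, e₁⟫ = (⟪w j, ξ⟫ : ℝ) := by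
            rw [hcw, real_inner_smul_left, real_inner_smul_left,
              mul_comm c (⟪w i, e₁⟫ : ℝ), ← mul_assoc, div_mul_cancel₀ _ (he i), mul_comm]
          rw [hkey]
      · rintro f ⟨r, rfl⟩
        exact ⟨r • e₁, rfl⟩
  · intro i j hnp
    ext z
    simp only [Set.mem_inter_iff, Set.mem_setOf_eq, Set.mem_empty_iff_false, iff_false]
    rintro ⟨⟨hz, hiz⟩, ⟨_, hjz⟩⟩
    obtain ⟨l, hl⟩ := nz z hz
    have h1 : ∃ c : ℝ, 0 < c ∧ w l = c • w i := by
      by_contra hc; exact hl (hiz l hc)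
    have h2 : ∃ c : ℝ, 0 < c ∧ w l = c • w j := by
      by_contra hc; exact hl (hjz l hc)
    exact hnp (trans i l j (symm l i h1) h2)
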